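/- arXiv:2111.03364 — 4 statements merged into one kernel-verified Lean document; each statement's English description precedes it below -/
import Mathlib

section
/- Let u : ℝ² → ℝ be differentiable at a point (r, z) with r > 0, and define the rotational extension û : ℝ³ → ℝ by û(x₁, x₂, x₃) = u( ‖(x₁, x₂)‖ , x₃ ). Then û is differentiable at every point x = (x₁, x₂, x₃) with ‖(x₁, x₂)‖ = r and x₃ = z, and the Euclidean norms of the gradients agree: ‖∇û(x)‖ = ‖∇u(r, z)‖. -/
open MeasureTheory

set_option maxHeartbeats 2000000

/-- The point `(a, b)` of the Euclidean plane. -/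
noncomputable def mk2 (a b : ℝ) : EuclideanSpace ℝ (Fin 2) :=
  (EuclideanSpace.equiv (Fin 2) ℝ).symm ![a, b]

/-- If `u` is differentiable at `(r, z)` with `r > 0`, then its rotational
extension `uhat(x₁,x₂,x₃) = u(‖(x₁,x₂)‖, x₃)` is differentiable at every point
over `(r, z)`, with equal Euclidean gradient norms. -/
theorem rotational_extension_gradient
    (u : EuclideanSpace ℝ (Fin 2) → ℝ) (r z : ℝ) (hr : 0 < r)
    (hu : DifferentiableAt ℝ u (mk2 r z))
    (uhat : EuclideanSpace ℝ (Fin 3) → ℝ)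
    (huhat : ∀ x : EuclideanSpace ℝ (Fin 3),
      uhat x = u (mk2 (Real.sqrt ((x 0) ^ 2 + (x 1) ^ 2)) (x 2))) :
    ∀ x : EuclideanSpace ℝ (Fin 3),
      Real.sqrt ((x 0) ^ 2 + (x 1) ^ 2) = r → x 2 = z →
      DifferentiableAt ℝ uhat x ∧ ‖fderiv ℝ uhat x‖ = ‖fderiv ℝ u (mk2 r z)‖ := by
  intro x hx1 hx2
  have hx2sq : (x 0)^2 + (x 1)^2 = r^2 := by
    have h := Real.sq_sqrt (by positivity : (0:ℝ) ≤ (x 0)^2 + (x 1)^2)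
    rw [hx1] at h; linarith
  -- the linear functional `c v = (x₀ v₀ + x₁ v₁)/r`
  set c : EuclideanSpace ℝ (Fin 3) →L[ℝ] ℝ :=
    (x 0 / r) • EuclideanSpace.proj (𝕜 := ℝ) 0 + (x 1 / r) • EuclideanSpace.proj (𝕜 := ℝ) 1
    with hc
  have hcapp : ∀ v : EuclideanSpace ℝ (Fin 3), c v = x 0 / r * v 0 + x 1 / r * v 1 := by
    intro v; simp [hc]
  -- derivative of the radial coordinate
  have hrad : HasFDerivAt (fun v : EuclideanSpace ℝ (Fin 3) => Real.sqrt ((v 0)^2 + (v 1)^2))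
      c x := by
    have h0 : HasFDerivAt (fun v : EuclideanSpace ℝ (Fin 3) => v 0)
        (EuclideanSpace.proj (𝕜 := ℝ) 0) x :=
      (EuclideanSpace.proj 0 : EuclideanSpace ℝ (Fin 3) →L[ℝ] ℝ).hasFDerivAt
    have h1 : HasFDerivAt (fun v : EuclideanSpace ℝ (Fin 3) => v 1)
        (EuclideanSpace.proj (𝕜 := ℝ) 1) x :=
      (EuclideanSpace.proj 1 : EuclideanSpace ℝ (Fin 3) →L[ℝ] ℝ).hasFDerivAt
    have hq : HasFDerivAt (fun v : EuclideanSpace ℝ (Fin 3) => (v 0)^2 + (v 1)^2)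
        ((x 0 • EuclideanSpace.proj (𝕜 := ℝ) 0 + x 0 • EuclideanSpace.proj (𝕜 := ℝ) 0)
          + (x 1 • EuclideanSpace.proj (𝕜 := ℝ) 1 + x 1 • EuclideanSpace.proj (𝕜 := ℝ) 1)) x := by
      rw [show (fun v : EuclideanSpace ℝ (Fin 3) => (v 0)^2 + (v 1)^2) = fun v => v 0 * v 0 + v 1 * v 1 from by funext v; ring]
      exact (h0.mul h0).add (h1.mul h1)
    have hs : HasDerivAt Real.sqrt (1 / (2 * Real.sqrt ((x 0)^2 + (x 1)^2)))
        ((x 0)^2 + (x 1)^2) := Real.hasDerivAt_sqrt (by nlinarith)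
    have := hs.comp_hasFDerivAt x hq
    refine this.congr_fderiv ?_
    ext v
    have hsq : Real.sqrt ((x 0)^2 + (x 1)^2) = r := hx1
    simp [hsq, hc]
    field_simp
    ring
  -- the derivative `D` of the cylindrical projection map φ
  set M : EuclideanSpace ℝ (Fin 3) →L[ℝ] (Fin 2 → ℝ) :=
    ContinuousLinearMap.pi ![c, EuclideanSpace.proj (𝕜 := ℝ) 2] with hM
  set D : EuclideanSpace ℝ (Fin 3) →L[ℝ] EuclideanSpace ℝ (Fin 2) :=
    ((EuclideanSpace.equiv (Fin 2) ℝ).symm : (Fin 2 → ℝ) →L[ℝ] EuclideanSpace ℝ (Fin 2)).comp M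
    with hD
  have hDapp : ∀ v : EuclideanSpace ℝ (Fin 3), D v = mk2 (c v) (v 2) := by
    intro v
    ext i
    fin_cases i <;> rfl
  set φ : EuclideanSpace ℝ (Fin 3) → EuclideanSpace ℝ (Fin 2) :=
    fun v => mk2 (Real.sqrt ((v 0)^2 + (v 1)^2)) (v 2) with hφdef
  have hφ : HasFDerivAt φ D x := by
    have hψ : HasFDerivAt (fun v : EuclideanSpace ℝ (Fin 3) =>
        (fun i => ![Real.sqrt ((v 0)^2 + (v 1)^2), v 2] i : Fin 2 → ℝ)) M x := by
      rw [hM]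
      apply hasFDerivAt_pi''
      intro i
      fin_cases i
      · simpa using hrad
      · simpa using
          (EuclideanSpace.proj 2 : EuclideanSpace ℝ (Fin 3) →L[ℝ] ℝ).hasFDerivAt
    have := (((EuclideanSpace.equiv (Fin 2) ℝ).symm :
        (Fin 2 → ℝ) →L[ℝ] EuclideanSpace ℝ (Fin 2)).hasFDerivAt).comp x hψ
    exact this
  -- chain rule
  set L : EuclideanSpace ℝ (Fin 2) →L[ℝ] ℝ := fderiv ℝ u (mk2 r z) with hL
  have hφx : φ x = mk2 r z := by rw [hφdef]; simp only [hx1, hx2]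
  have huφ : HasFDerivAt u L (φ x) := by rw [hφx]; exact hu.hasFDerivAt
  have huhat' : HasFDerivAt uhat (L.comp D) x := by
    have h := huφ.comp x hφ
    have : uhat = u ∘ φ := funext huhat
    rw [this]; exact h
  refine ⟨huhat'.differentiableAt, ?_⟩
  rw [huhat'.fderiv]
  -- norm computations
  have hnorm2 : ∀ y : EuclideanSpace ℝ (Fin 2), ‖y‖ = Real.sqrt ((y 0)^2 + (y 1)^2) := by
    intro y; simp [EuclideanSpace.norm_eq, Fin.sum_univ_two, sq_abs]
  have hnorm3 : ∀ v : EuclideanSpace ℝ (Fin 3),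
      ‖v‖ = Real.sqrt ((v 0)^2 + (v 1)^2 + (v 2)^2) := by
    intro v; simp [EuclideanSpace.norm_eq, Fin.sum_univ_three, sq_abs]
  have hDle : ‖D‖ ≤ 1 := by
    refine ContinuousLinearMap.opNorm_le_bound _ zero_le_one fun v => ?_
    rw [one_mul, hDapp v, hnorm3 v]
    have h1 : ‖mk2 (c v) (v 2)‖ = Real.sqrt ((c v)^2 + (v 2)^2) := by
      rw [hnorm2]; rfl
    rw [h1]
    apply Real.sqrt_le_sqrt
    have hcs : (c v)^2 ≤ (v 0)^2 + (v 1)^2 := by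
      rw [hcapp v]
      have key : (x 0 * v 0 + x 1 * v 1)^2 ≤ r^2 * ((v 0)^2 + (v 1)^2) := by
        nlinarith [sq_nonneg (x 0 * v 1 - x 1 * v 0)]
      have : (x 0 / r * v 0 + x 1 / r * v 1)^2 = (x 0 * v 0 + x 1 * v 1)^2 / r^2 := by
        field_simp
      rw [this, div_le_iff₀ (by positivity)]
      nlinarith
    linarith
  have hle : ‖L.comp D‖ ≤ ‖L‖ :=
    le_trans (ContinuousLinearMap.opNorm_comp_le L D)
      (by nlinarith [norm_nonneg L])
  have hge : ‖L‖ ≤ ‖L.comp D‖ := by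
    refine ContinuousLinearMap.opNorm_le_bound _ (norm_nonneg _) fun y => ?_
    set s : EuclideanSpace ℝ (Fin 3) :=
      (EuclideanSpace.equiv (Fin 3) ℝ).symm ![x 0 / r * y 0, x 1 / r * y 0, y 1] with hs
    have hs0 : s 0 = x 0 / r * y 0 := rfl
    have hs1 : s 1 = x 1 / r * y 0 := rfl
    have hs2 : s 2 = y 1 := rfl
    have hDs : D s = y := by
      rw [hDapp s, hcapp s, hs0, hs1, hs2]
      have h0 : x 0 / r * (x 0 / r * y 0) + x 1 / r * (x 1 / r * y 0) = y 0 := by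
        field_simp
        linear_combination y 0 * hx2sq
      rw [h0]
      ext i; fin_cases i <;> rfl
    have hns : ‖s‖ = ‖y‖ := by
      rw [hnorm3, hnorm2, hs0, hs1, hs2]
      congr 1
      have h0 : (x 0 / r * y 0)^2 + (x 1 / r * y 0)^2 = (y 0)^2 := by
        field_simp
        linear_combination (y 0)^2 * hx2sq
      linarith
    calc ‖L y‖ = ‖(L.comp D) s‖ := by rw [ContinuousLinearMap.comp_apply, hDs]
      _ ≤ ‖L.comp D‖ * ‖s‖ := (L.comp D).le_opNorm s
      _ = ‖L.comp D‖ * ‖y‖ := by rw [hns]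
  exact le_antisymm hle hge
end

section
/- Let Q ⊆ (0, ∞) × ℝ be a measurable set, let Q̂ = { x ∈ ℝ³ : ( ‖(x₁, x₂)‖ , x₃ ) ∈ Q } be the corresponding solid of revolution, let u : ℝ² → ℝ be continuously differentiable, and let û(x₁,x₂,x₃) = u( ‖(x₁,x₂)‖ , x₃ ) be the rotational extension of u. Then ∫_{Q̂} ( û(x)² + ‖∇û(x)‖² ) dx = 2π · ∫_{Q} ( u(r, z)² + ‖∇u(r, z)‖² ) · r d(r, z), i.e. ‖û‖²_{H¹(Q̂)} = 2π · ‖u‖²_{H¹_r(Q)}, as an identity in [0, ∞]. -/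
open MeasureTheory

open scoped ENNReal

lemma mk2_eq_smul (a b : ℝ) :
    mk2 a b = a • (EuclideanSpace.single (0 : Fin 2) (1:ℝ))
      + b • (EuclideanSpace.single (1 : Fin 2) (1:ℝ)) := by
  ext i
  fin_cases i <;> simp [mk2]

lemma continuous_mk2 : Continuous (fun t : ℝ × ℝ => mk2 t.1 t.2) := by
  have : (fun t : ℝ × ℝ => mk2 t.1 t.2) = fun t : ℝ × ℝ =>
      t.1 • (EuclideanSpace.single (0 : Fin 2) (1:ℝ))
        + t.2 • (EuclideanSpace.single (1 : Fin 2) (1:ℝ)) := by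
    funext t; exact mk2_eq_smul _ _
  rw [this]
  exact (continuous_fst.smul continuous_const).add (continuous_snd.smul continuous_const)

lemma clm_norm_sq {n : ℕ} (M : EuclideanSpace ℝ (Fin n) →L[ℝ] ℝ) :
    ‖M‖ ^ 2 = ∑ i, (M (EuclideanSpace.single i 1)) ^ 2 := by
  set v := (InnerProductSpace.toDual ℝ (EuclideanSpace ℝ (Fin n))).symm M with hv
  have h1 : ‖M‖ = ‖v‖ := by rw [hv, LinearIsometryEquiv.norm_map]
  have h2 : ∀ i, M (EuclideanSpace.single i 1) = v i := by
    intro i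
    have : (inner ℝ v (EuclideanSpace.single i (1:ℝ)) : ℝ) = M (EuclideanSpace.single i 1) :=
      InnerProductSpace.toDual_symm_apply
    rw [← this, real_inner_comm, EuclideanSpace.inner_single_left]
    simp
  rw [h1, EuclideanSpace.norm_eq, Real.sq_sqrt (by positivity)]
  exact Finset.sum_congr rfl fun i _ => by rw [h2 i, Real.norm_eq_abs, sq_abs]

noncomputable def Amap (x : EuclideanSpace ℝ (Fin 3)) :
    EuclideanSpace ℝ (Fin 3) →L[ℝ] EuclideanSpace ℝ (Fin 2) :=
  (((1 / (2 * Real.sqrt ((x 0)^2 + (x 1)^2))) •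
      ((2 * x 0) • (EuclideanSpace.proj (0 : Fin 3) : EuclideanSpace ℝ (Fin 3) →L[ℝ] ℝ)
        + (2 * x 1) • (EuclideanSpace.proj (1 : Fin 3)))).smulRight
    (EuclideanSpace.single 0 (1:ℝ)))
  + ((EuclideanSpace.proj (2 : Fin 3) : EuclideanSpace ℝ (Fin 3) →L[ℝ] ℝ).smulRight
    (EuclideanSpace.single 1 (1:ℝ)))

lemma hasFDerivAt_F (x : EuclideanSpace ℝ (Fin 3)) (hr : (x 0)^2 + (x 1)^2 ≠ 0) :
    HasFDerivAt (fun y : EuclideanSpace ℝ (Fin 3) =>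
        mk2 (Real.sqrt ((y 0)^2 + (y 1)^2)) (y 2)) (Amap x) x := by
  have h0 : HasFDerivAt (fun y : EuclideanSpace ℝ (Fin 3) => (y 0)^2 + (y 1)^2)
      ((2 * x 0) • (EuclideanSpace.proj (0 : Fin 3) : EuclideanSpace ℝ (Fin 3) →L[ℝ] ℝ)
        + (2 * x 1) • (EuclideanSpace.proj (1 : Fin 3))) x := by
    have ha := ((EuclideanSpace.proj (0 : Fin 3) : EuclideanSpace ℝ (Fin 3) →L[ℝ] ℝ).hasFDerivAt
      (x := x)).mul ((EuclideanSpace.proj (0 : Fin 3) :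
        EuclideanSpace ℝ (Fin 3) →L[ℝ] ℝ).hasFDerivAt (x := x))
    have hb := ((EuclideanSpace.proj (1 : Fin 3) : EuclideanSpace ℝ (Fin 3) →L[ℝ] ℝ).hasFDerivAt
      (x := x)).mul ((EuclideanSpace.proj (1 : Fin 3) :
        EuclideanSpace ℝ (Fin 3) →L[ℝ] ℝ).hasFDerivAt (x := x))
    have hab := ha.add hb
    have heq : (fun y : EuclideanSpace ℝ (Fin 3) => (y 0)^2 + (y 1)^2)
        = fun y : EuclideanSpace ℝ (Fin 3) =>
          (EuclideanSpace.proj (0 : Fin 3)) y * (EuclideanSpace.proj (0 : Fin 3)) y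
            + (EuclideanSpace.proj (1 : Fin 3)) y * (EuclideanSpace.proj (1 : Fin 3)) y := by
      funext y; simp [pow_two]
    rw [heq]
    refine hab.congr_fderiv ?_
    have hp0 : (EuclideanSpace.proj (0 : Fin 3) : EuclideanSpace ℝ (Fin 3) →L[ℝ] ℝ) x = x 0 := rfl
    have hp1 : (EuclideanSpace.proj (1 : Fin 3) : EuclideanSpace ℝ (Fin 3) →L[ℝ] ℝ) x = x 1 := rfl
    rw [hp0, hp1]
    module
  have hsqrt : HasFDerivAt (fun y : EuclideanSpace ℝ (Fin 3) => Real.sqrt ((y 0)^2 + (y 1)^2))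
      ((1 / (2 * Real.sqrt ((x 0)^2 + (x 1)^2))) •
        ((2 * x 0) • (EuclideanSpace.proj (0 : Fin 3) : EuclideanSpace ℝ (Fin 3) →L[ℝ] ℝ)
          + (2 * x 1) • (EuclideanSpace.proj (1 : Fin 3)))) x := by
    exact (Real.hasDerivAt_sqrt hr).comp_hasFDerivAt x h0
  have h2 : HasFDerivAt (fun y : EuclideanSpace ℝ (Fin 3) => y 2)
      (EuclideanSpace.proj (2 : Fin 3) : EuclideanSpace ℝ (Fin 3) →L[ℝ] ℝ) x :=
    (EuclideanSpace.proj (2 : Fin 3) : EuclideanSpace ℝ (Fin 3) →L[ℝ] ℝ).hasFDerivAt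
  have hsum := (hsqrt.smul_const (EuclideanSpace.single (0 : Fin 2) (1:ℝ))).add
    (h2.smul_const (EuclideanSpace.single (1 : Fin 2) (1:ℝ)))
  have hfun : (fun y : EuclideanSpace ℝ (Fin 3) => mk2 (Real.sqrt ((y 0)^2 + (y 1)^2)) (y 2))
      = fun y : EuclideanSpace ℝ (Fin 3) =>
        Real.sqrt ((y 0)^2 + (y 1)^2) • (EuclideanSpace.single (0 : Fin 2) (1:ℝ))
          + (y 2) • (EuclideanSpace.single (1 : Fin 2) (1:ℝ)) :=
    funext fun y => mk2_eq_smul _ _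
  rw [hfun, Amap]
  exact hsum

lemma norm_comp_Amap (x : EuclideanSpace ℝ (Fin 3))
    (hr : 0 < (x 0)^2 + (x 1)^2) (L : EuclideanSpace ℝ (Fin 2) →L[ℝ] ℝ) :
    ‖L.comp (Amap x)‖ ^ 2 = ‖L‖ ^ 2 := by
  have hs : Real.sqrt ((x 0)^2 + (x 1)^2) ^ 2 = (x 0)^2 + (x 1)^2 :=
    Real.sq_sqrt hr.le
  have hrpos : 0 < Real.sqrt ((x 0)^2 + (x 1)^2) := Real.sqrt_pos.mpr hr
  rw [clm_norm_sq, clm_norm_sq]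
  rw [Fin.sum_univ_three, Fin.sum_univ_two]
  have happ : ∀ v : EuclideanSpace ℝ (Fin 3), (L.comp (Amap x)) v =
      (1 / (2 * Real.sqrt ((x 0)^2 + (x 1)^2)) * (2 * x 0 * v 0 + 2 * x 1 * v 1)) *
        L (EuclideanSpace.single 0 (1:ℝ)) + v 2 * L (EuclideanSpace.single 1 (1:ℝ)) := by
    intro v
    simp only [ContinuousLinearMap.comp_apply, Amap, ContinuousLinearMap.add_apply,
      ContinuousLinearMap.smulRight_apply, ContinuousLinearMap.smul_apply,
      map_add, _root_.map_smul, smul_eq_mul]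
    rfl
  rw [happ, happ, happ]
  have e00 : (EuclideanSpace.single (0 : Fin 3) (1:ℝ)) 0 = 1 := by simp
  have e01 : (EuclideanSpace.single (0 : Fin 3) (1:ℝ)) 1 = 0 := by simp
  have e02 : (EuclideanSpace.single (0 : Fin 3) (1:ℝ)) 2 = 0 := by simp
  have e10 : (EuclideanSpace.single (1 : Fin 3) (1:ℝ)) 0 = 0 := by simp
  have e11 : (EuclideanSpace.single (1 : Fin 3) (1:ℝ)) 1 = 1 := by simp
  have e12 : (EuclideanSpace.single (1 : Fin 3) (1:ℝ)) 2 = 0 := by simp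
  have e20 : (EuclideanSpace.single (2 : Fin 3) (1:ℝ)) 0 = 0 := by simp
  have e21 : (EuclideanSpace.single (2 : Fin 3) (1:ℝ)) 1 = 0 := by simp
  have e22 : (EuclideanSpace.single (2 : Fin 3) (1:ℝ)) 2 = 1 := by simp
  rw [e00, e01, e02, e10, e11, e12, e20, e21, e22]
  set r := Real.sqrt ((x 0)^2 + (x 1)^2)
  field_simp
  ring_nf
  nlinarith [hs, sq_nonneg (L (EuclideanSpace.single (0:Fin 2) (1:ℝ))),
    sq_nonneg (L (EuclideanSpace.single (1:Fin 2) (1:ℝ))), hrpos]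

theorem lintegral_comp_polarCoord_symm' (f : ℝ × ℝ → ℝ≥0∞) :
    (∫⁻ p in polarCoord.target, ENNReal.ofReal p.1 * f (polarCoord.symm p)) = ∫⁻ p, f p := by
  symm
  set B : ℝ × ℝ → ℝ × ℝ →L[ℝ] ℝ × ℝ := fun p =>
    LinearMap.toContinuousLinearMap (Matrix.toLin (Module.Basis.finTwoProd ℝ) (Module.Basis.finTwoProd ℝ)
      !![Real.cos p.2, -p.1 * Real.sin p.2; Real.sin p.2, p.1 * Real.cos p.2]) with hB
  have A : ∀ p ∈ polarCoord.target, HasFDerivWithinAt polarCoord.symm (B p) polarCoord.target p :=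
    fun p _ => (hasFDerivAt_polarCoord_symm p).hasFDerivWithinAt
  have hdet : ∀ p ∈ polarCoord.target, (B p).det = p.1 := by
    intro p _
    rw [hB]
    simp only [ContinuousLinearMap.det, LinearMap.coe_toContinuousLinearMap,
      LinearMap.det_toLin, Matrix.det_fin_two_of]
    linear_combination p.1 * (Real.sin_sq_add_cos_sq p.2)
  calc
    (∫⁻ p, f p) = ∫⁻ p in polarCoord.source, f p := by
      rw [← setLIntegral_univ]
      exact (setLIntegral_congr polarCoord_source_ae_eq_univ.symm)
    _ = ∫⁻ p in polarCoord.symm '' polarCoord.target, f p := by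
      rw [polarCoord.symm_image_target_eq_source]
    _ = ∫⁻ p in polarCoord.target, ENNReal.ofReal |(B p).det| * f (polarCoord.symm p) := by
      exact lintegral_image_eq_lintegral_abs_det_fderiv_mul volume
        polarCoord.open_target.measurableSet A polarCoord.symm.injOn f
    _ = ∫⁻ p in polarCoord.target, ENNReal.ofReal p.1 * f (polarCoord.symm p) := by
      apply setLIntegral_congr_fun polarCoord.open_target.measurableSet
      intro p hp
      beta_reduce
      rw [hdet p hp, abs_of_pos hp.1]

theorem lintegral_radial (g : ℝ → ℝ≥0∞) (hg : Measurable g) :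
    ∫⁻ y : ℝ × ℝ, g (Real.sqrt (y.1 ^ 2 + y.2 ^ 2)) =
      ENNReal.ofReal (2 * Real.pi) * ∫⁻ r : ℝ, g r * ENNReal.ofReal r := by
  rw [← lintegral_comp_polarCoord_symm' (fun y => g (Real.sqrt (y.1 ^ 2 + y.2 ^ 2)))]
  have hcongr : ∀ p ∈ polarCoord.target,
      ENNReal.ofReal p.1 * g (Real.sqrt ((polarCoord.symm p).1 ^ 2 + (polarCoord.symm p).2 ^ 2))
        = ENNReal.ofReal p.1 * g p.1 := by
    rintro ⟨r, θ⟩ hp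
    have h1 : ((r * Real.cos θ) ^ 2 + (r * Real.sin θ) ^ 2) = r ^ 2 := by
      have := Real.sin_sq_add_cos_sq θ; nlinarith
    simp only [polarCoord_symm_apply]
    rw [h1, Real.sqrt_sq (le_of_lt hp.1)]
  rw [setLIntegral_congr_fun polarCoord.open_target.measurableSet
    hcongr]
  rw [polarCoord_target, Measure.volume_eq_prod, ← Measure.prod_restrict,
    lintegral_prod _ (by fun_prop)]
  simp only [lintegral_const, Measure.restrict_apply MeasurableSet.univ, Set.univ_inter,
    Real.volume_Ioo]
  calc ∫⁻ r in Set.Ioi (0:ℝ), ENNReal.ofReal r * g r * ENNReal.ofReal (Real.pi - -Real.pi)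
      = ∫⁻ r in Set.Ioi (0:ℝ), ENNReal.ofReal (2 * Real.pi) * (g r * ENNReal.ofReal r) := by
        congr 1; funext r
        rw [show Real.pi - -Real.pi = 2 * Real.pi by ring]
        ring
    _ = ENNReal.ofReal (2 * Real.pi) * ∫⁻ r in Set.Ioi (0:ℝ), g r * ENNReal.ofReal r := by
        rw [lintegral_const_mul' _ _ ENNReal.ofReal_ne_top]
    _ = ENNReal.ofReal (2 * Real.pi) * ∫⁻ r : ℝ, g r * ENNReal.ofReal r := by
        congr 1
        rw [← lintegral_indicator measurableSet_Ioi]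
        congr 1; funext r
        by_cases h : r ∈ Set.Ioi (0:ℝ)
        · rw [Set.indicator_of_mem h]
        · rw [Set.indicator_of_notMem h, ENNReal.ofReal_of_nonpos (by simpa using h), mul_zero]
theorem key3 (h : EuclideanSpace ℝ (Fin 2) → ℝ≥0∞) (hmeas : Measurable h) :
    (∫⁻ x : EuclideanSpace ℝ (Fin 3),
        h (mk2 (Real.sqrt ((x 0) ^ 2 + (x 1) ^ 2)) (x 2))) =
      ENNReal.ofReal (2 * Real.pi) *
        ∫⁻ p : EuclideanSpace ℝ (Fin 2), h p * ENNReal.ofReal (p 0) := by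
  have hmk2 : Measurable (fun t : ℝ × ℝ => h (mk2 t.1 t.2)) :=
    hmeas.comp continuous_mk2.measurable
  -- LHS: transfer to (Fin 3 → ℝ)
  have s1 : (∫⁻ x : EuclideanSpace ℝ (Fin 3),
        h (mk2 (Real.sqrt ((x 0) ^ 2 + (x 1) ^ 2)) (x 2)))
      = ∫⁻ y : Fin 3 → ℝ, h (mk2 (Real.sqrt ((y 0) ^ 2 + (y 1) ^ 2)) (y 2)) := by
    rw [← (PiLp.volume_preserving_toLp (Fin 3)).lintegral_comp_emb
      (MeasurableEquiv.toLp 2 (Fin 3 → ℝ)).measurableEmbedding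
      (fun x => h (mk2 (Real.sqrt ((x 0) ^ 2 + (x 1) ^ 2)) (x 2)))]
  -- transfer to ℝ × (Fin 2 → ℝ)
  have s2 : (∫⁻ y : Fin 3 → ℝ, h (mk2 (Real.sqrt ((y 0) ^ 2 + (y 1) ^ 2)) (y 2)))
      = ∫⁻ q : ℝ × (Fin 2 → ℝ), h (mk2 (Real.sqrt ((q.2 0) ^ 2 + (q.2 1) ^ 2)) q.1) := by
    rw [← ((volume_preserving_piFinSuccAbove (fun _ : Fin 3 => ℝ) 2).symm
      (MeasurableEquiv.piFinSuccAbove (fun _ : Fin 3 => ℝ) 2)).lintegral_comp_emb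
      (MeasurableEquiv.piFinSuccAbove (fun _ : Fin 3 => ℝ) 2).symm.measurableEmbedding
      (fun y => h (mk2 (Real.sqrt ((y 0) ^ 2 + (y 1) ^ 2)) (y 2)))]
    refine lintegral_congr fun q => ?_
    have h0 : ((MeasurableEquiv.piFinSuccAbove (fun _ : Fin 3 => ℝ) 2).symm q) 0 = q.2 0 := by
      show Fin.insertNth (α := fun _ : Fin 3 => ℝ) (2 : Fin 3) q.1 q.2 0 = q.2 0
      have hh : (0 : Fin 3) = Fin.succAbove 2 0 := by decide
      rw [hh, Fin.insertNth_apply_succAbove]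
    have h1 : ((MeasurableEquiv.piFinSuccAbove (fun _ : Fin 3 => ℝ) 2).symm q) 1 = q.2 1 := by
      show Fin.insertNth (α := fun _ : Fin 3 => ℝ) (2 : Fin 3) q.1 q.2 1 = q.2 1
      have hh : (1 : Fin 3) = Fin.succAbove 2 1 := by decide
      rw [hh, Fin.insertNth_apply_succAbove]
    have h2 : ((MeasurableEquiv.piFinSuccAbove (fun _ : Fin 3 => ℝ) 2).symm q) 2 = q.1 := by
      show Fin.insertNth (α := fun _ : Fin 3 => ℝ) (2 : Fin 3) q.1 q.2 2 = q.1
      simp [MeasurableEquiv.piFinSuccAbove]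
    rw [h0, h1, h2]
  -- transfer to ℝ × (ℝ × ℝ)
  have s3 : (∫⁻ q : ℝ × (Fin 2 → ℝ), h (mk2 (Real.sqrt ((q.2 0) ^ 2 + (q.2 1) ^ 2)) q.1))
      = ∫⁻ t : ℝ × (ℝ × ℝ), h (mk2 (Real.sqrt (t.2.1 ^ 2 + t.2.2 ^ 2)) t.1) := by
    have mp : MeasurePreserving (Prod.map (id : ℝ → ℝ)
        (MeasurableEquiv.finTwoArrow (α := ℝ)).symm)
        (volume : Measure (ℝ × (ℝ × ℝ))) (volume : Measure (ℝ × (Fin 2 → ℝ))) :=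
      (MeasurePreserving.id volume).prod
        ((volume_preserving_finTwoArrow ℝ).symm (MeasurableEquiv.finTwoArrow))
    have m1 : Measurable fun q : ℝ × (Fin 2 → ℝ) =>
        (Real.sqrt ((q.2 0) ^ 2 + (q.2 1) ^ 2), q.1) := by fun_prop
    have hf : Measurable (fun q : ℝ × (Fin 2 → ℝ) =>
        h (mk2 (Real.sqrt ((q.2 0) ^ 2 + (q.2 1) ^ 2)) q.1)) := hmk2.comp m1
    have hcv := mp.lintegral_comp hf
    refine hcv.symm.trans (lintegral_congr fun t => ?_)
    simp [MeasurableEquiv.finTwoArrow, Prod.map]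
  -- Fubini and polar
  have m2 : Measurable fun t : ℝ × (ℝ × ℝ) =>
      (Real.sqrt (t.2.1 ^ 2 + t.2.2 ^ 2), t.1) := by fun_prop
  rw [s1, s2, s3, Measure.volume_eq_prod,
    lintegral_prod (fun t : ℝ × (ℝ × ℝ) => h (mk2 (Real.sqrt (t.2.1 ^ 2 + t.2.2 ^ 2)) t.1))
      (hmk2.comp m2).aemeasurable]
  have s4 : ∀ z : ℝ, (∫⁻ y : ℝ × ℝ, h (mk2 (Real.sqrt (y.1 ^ 2 + y.2 ^ 2)) z))
      = ENNReal.ofReal (2 * Real.pi) * ∫⁻ r : ℝ, h (mk2 r z) * ENNReal.ofReal r := by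
    intro z
    exact lintegral_radial (fun r => h (mk2 r z))
      (hmk2.comp ((measurable_id.prodMk measurable_const)))
  simp only [s4]
  rw [lintegral_const_mul' _ _ ENNReal.ofReal_ne_top]
  -- RHS: transfer to ℝ × ℝ
  have r1 : (∫⁻ p : EuclideanSpace ℝ (Fin 2), h p * ENNReal.ofReal (p 0))
      = ∫⁻ t : ℝ × ℝ, h (mk2 t.1 t.2) * ENNReal.ofReal t.1 := by
    rw [← (PiLp.volume_preserving_toLp (Fin 2)).lintegral_comp_emb
      (MeasurableEquiv.toLp 2 (Fin 2 → ℝ)).measurableEmbedding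
      (fun p => h p * ENNReal.ofReal (p 0))]
    rw [← ((volume_preserving_finTwoArrow ℝ).symm
      (MeasurableEquiv.finTwoArrow)).lintegral_comp_emb
      (MeasurableEquiv.finTwoArrow (α := ℝ)).symm.measurableEmbedding]
    refine lintegral_congr fun t => ?_
    have heq : (WithLp.toLp 2
        ((MeasurableEquiv.finTwoArrow (α := ℝ)).symm t)) = mk2 t.1 t.2 := by
      ext i
      fin_cases i <;> simp [MeasurableEquiv.finTwoArrow, mk2] <;> rfl
    rw [heq]
    rfl
  have mofr : Measurable fun t : ℝ × ℝ => ENNReal.ofReal t.1 := by fun_prop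
  rw [r1, Measure.volume_eq_prod,
    lintegral_prod (fun t : ℝ × ℝ => h (mk2 t.1 t.2) * ENNReal.ofReal t.1)
      ((hmk2.mul mofr).aemeasurable)]
  congr 1
  exact lintegral_lintegral_swap
    (((hmk2.comp measurable_swap).mul (by fun_prop)).aemeasurable)

/-- For a `C¹` function `u` on the half-plane and its rotational extension
`uhat` about the `x₃`-axis, the `H¹`-norm of `uhat` on the solid of revolution
`Q̂` equals `2π` times the weighted `H¹_r`-norm of `u` on the cross section `Q`. -/
theorem rotational_H1_norm_identity
    (Q : Set (EuclideanSpace ℝ (Fin 2))) (hQmeas : MeasurableSet Q)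
    (hQ : ∀ p ∈ Q, 0 < p 0)
    (u : EuclideanSpace ℝ (Fin 2) → ℝ) (hu : ContDiff ℝ 1 u)
    (uhat : EuclideanSpace ℝ (Fin 3) → ℝ)
    (huhat : ∀ x : EuclideanSpace ℝ (Fin 3),
      uhat x = u (mk2 (Real.sqrt ((x 0) ^ 2 + (x 1) ^ 2)) (x 2))) :
    (∫⁻ x in {x : EuclideanSpace ℝ (Fin 3) |
        mk2 (Real.sqrt ((x 0) ^ 2 + (x 1) ^ 2)) (x 2) ∈ Q},
        ENNReal.ofReal ((uhat x) ^ 2 + ‖fderiv ℝ uhat x‖ ^ 2)) =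
      ENNReal.ofReal (2 * Real.pi) *
        ∫⁻ p in Q,
          ENNReal.ofReal ((u p) ^ 2 + ‖fderiv ℝ u p‖ ^ 2) *
            ENNReal.ofReal (p 0) := by
  set F3 : EuclideanSpace ℝ (Fin 3) → EuclideanSpace ℝ (Fin 2) :=
    fun x => mk2 (Real.sqrt ((x 0) ^ 2 + (x 1) ^ 2)) (x 2) with hF3
  set g : EuclideanSpace ℝ (Fin 2) → ℝ≥0∞ :=
    fun p => ENNReal.ofReal ((u p) ^ 2 + ‖fderiv ℝ u p‖ ^ 2) with hg
  have hgmeas : Measurable g := by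
    have h1 : Continuous u := hu.continuous
    have h2 : Continuous (fderiv ℝ u) := hu.continuous_fderiv one_ne_zero
    exact (Measurable.ennreal_ofReal (by fun_prop))
  have mF3 : Measurable F3 := by
    apply continuous_mk2.measurable.comp (f := fun x : EuclideanSpace ℝ (Fin 3) =>
      (Real.sqrt ((x 0) ^ 2 + (x 1) ^ 2), x 2))
    fun_prop
  have hSmeas : MeasurableSet {x : EuclideanSpace ℝ (Fin 3) | F3 x ∈ Q} := mF3 hQmeas
  -- pointwise identification of the integrand
  have hpt : ∀ x : EuclideanSpace ℝ (Fin 3),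
      Set.indicator {x | F3 x ∈ Q}
        (fun x => ENNReal.ofReal ((uhat x) ^ 2 + ‖fderiv ℝ uhat x‖ ^ 2)) x
        = Set.indicator Q g (F3 x) := by
    intro x
    by_cases hx : F3 x ∈ Q
    · rw [Set.indicator_of_mem (by exact hx), Set.indicator_of_mem hx]
      have hrpos : 0 < Real.sqrt ((x 0) ^ 2 + (x 1) ^ 2) := hQ _ hx
      have hspos : 0 < (x 0) ^ 2 + (x 1) ^ 2 := Real.sqrt_pos.mp hrpos
      have hF := hasFDerivAt_F x (ne_of_gt hspos)
      have hdu : HasFDerivAt u (fderiv ℝ u (F3 x)) (F3 x) :=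
        (hu.differentiable one_ne_zero (F3 x)).hasFDerivAt
      have huf : uhat = fun y => u (F3 y) := funext huhat
      have hcomp : HasFDerivAt uhat ((fderiv ℝ u (F3 x)).comp (Amap x)) x := by
        rw [huf]
        exact hdu.comp x hF
      have hfd : fderiv ℝ uhat x = (fderiv ℝ u (F3 x)).comp (Amap x) := hcomp.fderiv
      rw [huhat x, hfd, norm_comp_Amap x hspos]
    · rw [Set.indicator_of_notMem (by exact hx), Set.indicator_of_notMem hx]
  calc
    (∫⁻ x in {x : EuclideanSpace ℝ (Fin 3) |
        mk2 (Real.sqrt ((x 0) ^ 2 + (x 1) ^ 2)) (x 2) ∈ Q},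
        ENNReal.ofReal ((uhat x) ^ 2 + ‖fderiv ℝ uhat x‖ ^ 2))
      = ∫⁻ x, Set.indicator {x | F3 x ∈ Q}
          (fun x => ENNReal.ofReal ((uhat x) ^ 2 + ‖fderiv ℝ uhat x‖ ^ 2)) x :=
        (lintegral_indicator hSmeas _).symm
    _ = ∫⁻ x, Set.indicator Q g (F3 x) := lintegral_congr hpt
    _ = ENNReal.ofReal (2 * Real.pi) *
        ∫⁻ p, Set.indicator Q g p * ENNReal.ofReal (p 0) :=
      key3 (Set.indicator Q g) (hgmeas.indicator hQmeas)
    _ = ENNReal.ofReal (2 * Real.pi) *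
        ∫⁻ p, Set.indicator Q (fun p => g p * ENNReal.ofReal (p 0)) p := by
      congr 1
      refine lintegral_congr fun p => ?_
      by_cases hp : p ∈ Q
      · rw [Set.indicator_of_mem hp, Set.indicator_of_mem hp]
      · rw [Set.indicator_of_notMem hp, Set.indicator_of_notMem hp, zero_mul]
    _ = ENNReal.ofReal (2 * Real.pi) *
        ∫⁻ p in Q, g p * ENNReal.ofReal (p 0) := by
      rw [lintegral_indicator hQmeas]
end

section
/- For every dimension d ≥ 1 and all real numbers R > 0 and M > 0 there exists ρ > 0 (depending only on d, R, M) such that every convex set K ⊆ ℝ^d with K contained in the closed ball of radius R centered at the origin and with d-dimensional Lebesgue measure vol(K) ≥ M contains a closed ball of radius ρ, i.e. there exists x₀ ∈ K with closedBall(x₀, ρ) ⊆ K. -/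
open Metric MeasureTheory ENNReal Set

local notation "⟪" x ", " y "⟫" => @inner ℝ _ _ x y

lemma slab_volume (d : ℕ) (R ρ a₀ : ℝ) (hR : 0 ≤ R) (hρ : 0 ≤ ρ)
    (u : EuclideanSpace ℝ (Fin d)) (hd : 1 ≤ d) (hu : ‖u‖ = 1) :
    volume {x : EuclideanSpace ℝ (Fin d) | ‖x‖ ≤ R ∧ |⟪u, x⟫ - a₀| ≤ ρ} ≤
      ENNReal.ofReal (2*ρ) * ENNReal.ofReal (2*R) ^ (d - 1) := by
  haveI : NeZero d := ⟨by omega⟩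
  -- orthonormal basis with b 0 = u
  obtain ⟨b, hb⟩ : ∃ b : OrthonormalBasis (Fin d) ℝ (EuclideanSpace ℝ (Fin d)), b 0 = u := by
    have card : Module.finrank ℝ (EuclideanSpace ℝ (Fin d)) = Fintype.card (Fin d) := by
      simp
    have horth : Orthonormal ℝ (Set.restrict {(0 : Fin d)} (fun _ : Fin d => u)) := by
      constructor
      · intro i; exact hu
      · intro i j hij
        exact absurd (Subtype.ext ((i.2.out).trans (j.2.out).symm)) hij
    obtain ⟨b, hb⟩ := horth.exists_orthonormalBasis_extension_of_card_eq card
    exact ⟨b, hb 0 rfl⟩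
  set T : Set (EuclideanSpace ℝ (Fin d)) :=
    {x | ‖x‖ ≤ R ∧ |⟪u, x⟫ - a₀| ≤ ρ} with hT
  have hTclosed : IsClosed T := by
    apply IsClosed.inter
    · exact isClosed_le (continuous_norm) continuous_const
    · have : Continuous fun x : EuclideanSpace ℝ (Fin d) => |⟪u, x⟫ - a₀| :=
        ((continuous_const.inner continuous_id).sub continuous_const).abs
      exact isClosed_le this continuous_const
  have hpre : volume (b.repr.symm ⁻¹' T) = volume T :=
    b.measurePreserving_repr_symm.measure_preimage
      hTclosed.measurableSet.nullMeasurableSet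
  rw [← hpre]
  have hsub : b.repr.symm ⁻¹' T ⊆
      { y : EuclideanSpace ℝ (Fin d) | ∀ i : Fin d,
        y i ∈ (if i = 0 then Icc (a₀ - ρ) (a₀ + ρ) else Icc (-R) R) } := by
    intro y hy
    obtain ⟨h1, h2⟩ := hy
    have hnorm : ‖y‖ ≤ R := by rwa [LinearIsometryEquiv.norm_map] at h1
    have h0 : |y 0 - a₀| ≤ ρ := by
      have : ⟪u, b.repr.symm y⟫ = y 0 := by
        rw [← hb, ← b.repr.symm_apply_apply (b 0), real_inner_comm,
          b.repr.symm.inner_map_map, b.repr_self]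
        simp [EuclideanSpace.inner_single_right]
      rwa [this] at h2
    intro i
    by_cases hi : i = 0
    · subst hi
      simp only [if_pos rfl, Set.mem_Icc]
      constructor <;> [linarith [abs_le.mp h0 |>.1]; linarith [abs_le.mp h0 |>.2]]
    · simp only [if_neg hi, Set.mem_Icc]
      have : |y i| ≤ ‖y‖ := by
        rw [EuclideanSpace.norm_eq]
        calc |y i| = Real.sqrt (‖y i‖^2) := by
              rw [Real.norm_eq_abs, sq_abs, Real.sqrt_sq_eq_abs]
          _ ≤ _ := Real.sqrt_le_sqrt (Finset.single_le_sum
              (f := fun j => ‖y j‖^2) (fun j _ => sq_nonneg _) (Finset.mem_univ i))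
      have := this.trans hnorm
      constructor <;> [linarith [abs_le.mp this |>.1]; linarith [abs_le.mp this |>.2]]
  refine (measure_mono hsub).trans ?_
  have : { y : EuclideanSpace ℝ (Fin d) | ∀ i : Fin d,
        y i ∈ (if i = 0 then Icc (a₀ - ρ) (a₀ + ρ) else Icc (-R) R) } =
      (MeasurableEquiv.toLp 2 (Fin d → ℝ)).symm ⁻¹'
        (Set.pi Set.univ (fun i => if i = 0 then Icc (a₀ - ρ) (a₀ + ρ) else Icc (-R) R)) := by
    ext y; simp [Set.mem_pi]
  rw [this, (EuclideanSpace.volume_preserving_symm_measurableEquiv_toLp (Fin d)).measure_preimage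
    (MeasurableSet.univ_pi (fun i => by
      split <;> exact measurableSet_Icc)).nullMeasurableSet]
  rw [volume_pi_pi]
  have : ∀ i : Fin d, volume (if i = 0 then Icc (a₀ - ρ) (a₀ + ρ) else Icc (-R) R)
      = (if i = 0 then ENNReal.ofReal (2*ρ) else ENNReal.ofReal (2*R)) := by
    intro i; split <;> rw [Real.volume_Icc] <;> ring_nf
  rw [Finset.prod_congr rfl (fun i _ => this i),
    ← Finset.mul_prod_erase Finset.univ _ (Finset.mem_univ (0 : Fin d)), if_pos rfl]
  rw [Finset.prod_congr rfl (fun i hi => if_neg (Finset.mem_erase.mp hi).1),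
    Finset.prod_const, Finset.card_erase_of_mem (Finset.mem_univ _), Finset.card_univ,
    Fintype.card_fin]

lemma exists_symmetric_center (d : ℕ) (R M : ℝ) (hR : 0 < R) (hM : 0 < M)
    (F : Set (EuclideanSpace ℝ (Fin d))) (hFm : MeasurableSet F)
    (hFsub : F ⊆ closedBall 0 R) (hFvol : ENNReal.ofReal M ≤ volume F) :
    ∃ c : EuclideanSpace ℝ (Fin d),
      ENNReal.ofReal (M^2 / (2^(d+1) * (volume (closedBall (0:EuclideanSpace ℝ (Fin d)) R)).toReal))
        ≤ volume (F ∩ (fun x => (2:ℝ) • c - x) ⁻¹' F) := by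
  set V : ℝ := (volume (closedBall (0:EuclideanSpace ℝ (Fin d)) R)).toReal with hV
  have hVpos : 0 < V := ENNReal.toReal_pos (measure_closedBall_pos volume 0 hR).ne'
    measure_closedBall_lt_top.ne
  set t : ℝ := M^2 / (2^(d+1) * V) with ht
  by_contra hcon
  push_neg at hcon
  have hmap : ∀ x : EuclideanSpace ℝ (Fin d),
      Measurable fun c : EuclideanSpace ℝ (Fin d) => (2:ℝ) • c - x := fun x =>
    ((continuous_const_smul (2:ℝ)).sub continuous_const).measurable
  have hmap2 : ∀ c : EuclideanSpace ℝ (Fin d),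
      Measurable fun y : EuclideanSpace ℝ (Fin d) => (2:ℝ) • c - y := fun c =>
    (continuous_const.sub continuous_id).measurable
  have hG : Measurable (Function.uncurry fun (c x : EuclideanSpace ℝ (Fin d)) =>
      F.indicator (1 : EuclideanSpace ℝ (Fin d) → ℝ≥0∞) x * F.indicator 1 ((2:ℝ) • c - x)) := by
    rw [Function.uncurry_def]
    exact ((measurable_one.indicator hFm).comp measurable_snd).mul
      ((measurable_one.indicator hFm).comp
        (((continuous_fst.const_smul (2:ℝ)).sub continuous_snd).measurable))
  have hpoint : ∀ c x : EuclideanSpace ℝ (Fin d),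
      F.indicator (1 : EuclideanSpace ℝ (Fin d) → ℝ≥0∞) x * F.indicator 1 ((2:ℝ) • c - x)
      = (F ∩ (fun y => (2:ℝ) • c - y) ⁻¹' F).indicator (1 : EuclideanSpace ℝ (Fin d) → ℝ≥0∞) x := by
    intro c x
    by_cases hx : x ∈ F <;> by_cases hx2 : ((2:ℝ) • c - x) ∈ F <;>
      simp [Set.indicator_apply, hx, hx2]
  have hg : ∀ c : EuclideanSpace ℝ (Fin d),
      (∫⁻ x, F.indicator (1 : EuclideanSpace ℝ (Fin d) → ℝ≥0∞) x * F.indicator 1 ((2:ℝ) • c - x))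
      = volume (F ∩ (fun y => (2:ℝ) • c - y) ⁻¹' F) := by
    intro c
    simp_rw [hpoint c]
    rw [lintegral_indicator (hFm.inter ((hmap2 c) hFm))]
    simp only [Pi.one_apply]
    exact setLIntegral_one _
  have hpre : ∀ x : EuclideanSpace ℝ (Fin d),
      volume ((fun c : EuclideanSpace ℝ (Fin d) => (2:ℝ) • c - x) ⁻¹' F)
      = ENNReal.ofReal (((2:ℝ)^d)⁻¹) * volume F := by
    intro x
    have : (fun c : EuclideanSpace ℝ (Fin d) => (2:ℝ) • c - x) ⁻¹' F
        = (fun c : EuclideanSpace ℝ (Fin d) => (2:ℝ) • c) ⁻¹'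
          ((fun y : EuclideanSpace ℝ (Fin d) => y + (-x)) ⁻¹' F) := by
      ext c; simp [sub_eq_add_neg]
    rw [this, Measure.addHaar_preimage_smul volume (two_ne_zero) _,
      measure_preimage_add_right]
    congr 1
    rw [finrank_euclideanSpace_fin, abs_of_pos (by positivity)]
  have htotal : (∫⁻ c, volume (F ∩ (fun y => (2:ℝ) • c - y) ⁻¹' F))
      = ENNReal.ofReal (((2:ℝ)^d)⁻¹) * volume F * volume F := by
    have swap := lintegral_lintegral_swap (μ := (volume : Measure (EuclideanSpace ℝ (Fin d))))
      (ν := (volume : Measure (EuclideanSpace ℝ (Fin d)))) hG.aemeasurable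
    calc (∫⁻ c, volume (F ∩ (fun y => (2:ℝ) • c - y) ⁻¹' F))
        = ∫⁻ c, ∫⁻ x, F.indicator (1 : EuclideanSpace ℝ (Fin d) → ℝ≥0∞) x *
            F.indicator 1 ((2:ℝ) • c - x) := by
          simp_rw [hg]
      _ = ∫⁻ x, ∫⁻ c, F.indicator (1 : EuclideanSpace ℝ (Fin d) → ℝ≥0∞) x *
            F.indicator 1 ((2:ℝ) • c - x) := swap
      _ = ∫⁻ x, F.indicator (1 : EuclideanSpace ℝ (Fin d) → ℝ≥0∞) x *
            ∫⁻ c, F.indicator 1 ((2:ℝ) • c - x) := by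
          refine lintegral_congr fun x => ?_
          have hm : Measurable fun c : EuclideanSpace ℝ (Fin d) =>
              F.indicator (1 : EuclideanSpace ℝ (Fin d) → ℝ≥0∞) ((2:ℝ) • c - x) :=
            (measurable_one.indicator hFm).comp (hmap x)
          rw [lintegral_const_mul _ hm]
      _ = ∫⁻ x, F.indicator (1 : EuclideanSpace ℝ (Fin d) → ℝ≥0∞) x *
            (ENNReal.ofReal (((2:ℝ)^d)⁻¹) * volume F) := by
          refine lintegral_congr fun x => ?_
          congr 1
          have : ∀ c : EuclideanSpace ℝ (Fin d),
              F.indicator (1 : EuclideanSpace ℝ (Fin d) → ℝ≥0∞) ((2:ℝ) • c - x)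
              = ((fun c : EuclideanSpace ℝ (Fin d) => (2:ℝ) • c - x) ⁻¹' F).indicator
                  (1 : EuclideanSpace ℝ (Fin d) → ℝ≥0∞) c := by
            intro c
            by_cases hc : ((2:ℝ) • c - x) ∈ F <;> simp [Set.indicator_apply, hc]
          simp_rw [this]
          rw [lintegral_indicator ((hmap x) hFm)]
          simp only [Pi.one_apply]
          rw [setLIntegral_one, hpre x]
      _ = (∫⁻ x, F.indicator (1 : EuclideanSpace ℝ (Fin d) → ℝ≥0∞) x) *
            (ENNReal.ofReal (((2:ℝ)^d)⁻¹) * volume F) := by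
          rw [lintegral_mul_const _ (measurable_one.indicator hFm)]
      _ = ENNReal.ofReal (((2:ℝ)^d)⁻¹) * volume F * volume F := by
          rw [lintegral_indicator hFm]
          simp only [Pi.one_apply]
          rw [setLIntegral_one]; ring
  have hzero : ∀ c : EuclideanSpace ℝ (Fin d), c ∉ closedBall (0:EuclideanSpace ℝ (Fin d)) R →
      volume (F ∩ (fun y => (2:ℝ) • c - y) ⁻¹' F) = 0 := by
    intro c hc
    convert measure_empty (μ := (volume : Measure (EuclideanSpace ℝ (Fin d))))
    ext x
    simp only [Set.mem_inter_iff, Set.mem_preimage, Set.mem_empty_iff_false, iff_false]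
    rintro ⟨hx1, hx2⟩
    apply hc
    have h1 := hFsub hx1
    have h2 := hFsub hx2
    rw [mem_closedBall, dist_zero_right] at *
    have heq : x + ((2:ℝ) • c - x) = (2:ℝ) • c := by module
    have hle := norm_add_le x ((2:ℝ) • c - x)
    rw [heq, norm_smul] at hle
    simp only [Real.norm_ofNat] at hle
    linarith
  have hupper : (∫⁻ c, volume (F ∩ (fun y => (2:ℝ) • c - y) ⁻¹' F))
      ≤ ENNReal.ofReal t * volume (closedBall (0:EuclideanSpace ℝ (Fin d)) R) := by
    rw [← lintegral_indicator_const measurableSet_closedBall]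
    refine lintegral_mono fun c => ?_
    by_cases hc : c ∈ closedBall (0:EuclideanSpace ℝ (Fin d)) R
    · rw [Set.indicator_of_mem hc]
      exact (hcon c).le
    · rw [Set.indicator_of_notMem hc, hzero c hc]
  have hlow : ENNReal.ofReal (M^2 / 2^d)
      ≤ (∫⁻ c, volume (F ∩ (fun y => (2:ℝ) • c - y) ⁻¹' F)) := by
    rw [htotal]
    have heq : ENNReal.ofReal (M^2 / 2^d)
        = ENNReal.ofReal (((2:ℝ)^d)⁻¹) * ENNReal.ofReal M * ENNReal.ofReal M := by
      rw [← ENNReal.ofReal_mul (by positivity), ← ENNReal.ofReal_mul (by positivity)]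
      congr 1; field_simp
    rw [heq]
    exact mul_le_mul' (mul_le_mul' le_rfl hFvol) hFvol
  have hRHS : ENNReal.ofReal t * volume (closedBall (0:EuclideanSpace ℝ (Fin d)) R)
      = ENNReal.ofReal (M^2 / 2^(d+1)) := by
    rw [← ENNReal.ofReal_toReal (measure_closedBall_lt_top
      (x := (0:EuclideanSpace ℝ (Fin d))) (r := R)).ne, ← hV,
      ← ENNReal.ofReal_mul (by positivity)]
    congr 1
    rw [ht]; field_simp
  have hchain : ENNReal.ofReal (M^2 / 2^d) ≤ ENNReal.ofReal (M^2 / 2^(d+1)) :=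
    hlow.trans (hupper.trans_eq hRHS)
  rw [ENNReal.ofReal_le_ofReal_iff (by positivity)] at hchain
  have h1 : M^2 / 2^(d+1) < M^2 / 2^d := by
    apply div_lt_div_of_pos_left (by positivity) (by positivity)
    rw [pow_succ]; nlinarith [pow_pos (two_pos (α := ℝ)) d]
  linarith

/-- Uniform inradius bound: for every dimension `d ≥ 1` and all `R, M > 0`
there is `ρ > 0` such that every convex subset of the ball of radius `R` with
volume at least `M` contains a closed ball of radius `ρ`. -/
theorem uniform_inradius_bound
    (d : ℕ) (hd : 1 ≤ d) (R M : ℝ) (hR : 0 < R) (hM : 0 < M) :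
    ∃ ρ : ℝ, 0 < ρ ∧
      ∀ K : Set (EuclideanSpace ℝ (Fin d)), Convex ℝ K →
        K ⊆ closedBall 0 R → ENNReal.ofReal M ≤ volume K →
        ∃ x₀ ∈ K, closedBall x₀ ρ ⊆ K := by
  set V : ℝ := (volume (closedBall (0:EuclideanSpace ℝ (Fin d)) R)).toReal with hV
  have hVpos : 0 < V := ENNReal.toReal_pos (measure_closedBall_pos volume 0 hR).ne'
    measure_closedBall_lt_top.ne
  set t : ℝ := M^2 / (2^(d+1) * V) with ht
  have htpos : 0 < t := by positivity
  set ρ : ℝ := t / (4 * (2*R)^(d-1)) with hρ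
  have hρpos : 0 < ρ := by positivity
  refine ⟨ρ/2, by positivity, ?_⟩
  intro K hKconv hKsub hKvol
  set F : Set (EuclideanSpace ℝ (Fin d)) := closure K with hF
  have hFconv : Convex ℝ F := hKconv.closure
  have hFsub : F ⊆ closedBall 0 R := closure_minimal hKsub isClosed_closedBall
  have hFm : MeasurableSet F := isClosed_closure.measurableSet
  have hFvol : ENNReal.ofReal M ≤ volume F := hKvol.trans (measure_mono subset_closure)
  obtain ⟨c, hc⟩ := exists_symmetric_center d R M hR hM F hFm hFsub hFvol
  set S : Set (EuclideanSpace ℝ (Fin d)) := F ∩ (fun x => (2:ℝ) • c - x) ⁻¹' F with hS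
  have hSsub : S ⊆ F := Set.inter_subset_left
  have hmapeq : (fun x : EuclideanSpace ℝ (Fin d) => (2:ℝ) • c - x)
      = fun x => AffineMap.homothety c (-1:ℝ) x := by
    funext x
    rw [AffineMap.homothety_apply]
    simp only [neg_smul, one_smul, vsub_eq_sub, vadd_eq_add]
    module
  have hSconv : Convex ℝ S := hFconv.inter (by rw [hmapeq]; exact hFconv.affine_preimage _)
  have hSclosed : IsClosed S := isClosed_closure.inter
    (isClosed_closure.preimage (continuous_const.sub continuous_id))
  have hSvol : ENNReal.ofReal t ≤ volume S := hc
  have hSne : S.Nonempty := by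
    refine nonempty_of_measure_ne_zero (μ := (volume : Measure (EuclideanSpace ℝ (Fin d))))
      (fun h0 => ?_)
    rw [h0, le_zero_iff, ENNReal.ofReal_eq_zero] at hSvol
    linarith
  have hSsym : ∀ x ∈ S, (2:ℝ) • c - x ∈ S := by
    rintro x ⟨hx1, hx2⟩
    refine ⟨hx2, ?_⟩
    simp only [Set.mem_preimage]
    have : (2:ℝ) • c - ((2:ℝ) • c - x) = x := by module
    rwa [this]
  have hcS : c ∈ S := by
    obtain ⟨x₀, hx₀⟩ := hSne
    have : c = (1/2:ℝ) • x₀ + (1/2:ℝ) • ((2:ℝ) • c - x₀) := by module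
    rw [this]
    exact hSconv hx₀ (hSsym x₀ hx₀) (by norm_num) (by norm_num) (by norm_num)
  have hball : closedBall c ρ ⊆ S := by
    by_contra hnot
    obtain ⟨y, hyball, hyS⟩ := Set.not_subset.mp hnot
    obtain ⟨f, u, hfu, huy⟩ := geometric_hahn_banach_closed_point hSconv hSclosed hyS
    set v : EuclideanSpace ℝ (Fin d) := (InnerProductSpace.toDual ℝ _).symm f with hv
    have hfv : ∀ x : EuclideanSpace ℝ (Fin d), f x = ⟪v, x⟫ := fun x =>
      (InnerProductSpace.toDual_symm_apply).symm
    have hvne : v ≠ 0 := by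
      intro h0
      have h1 := hfu c hcS
      rw [hfv c, h0, inner_zero_left] at h1
      have h2 := huy
      rw [hfv y, h0, inner_zero_left] at h2
      linarith
    set u₀ : EuclideanSpace ℝ (Fin d) := ‖v‖⁻¹ • v with hu₀
    have hnu₀ : ‖u₀‖ = 1 := by
      rw [hu₀, norm_smul, norm_inv, norm_norm, inv_mul_cancel₀ (norm_ne_zero_iff.mpr hvne)]
    have hkey : ∀ a ∈ S, |⟪u₀, a⟫ - ⟪u₀, c⟫| ≤ ρ := by
      intro a ha
      have hbound : ∀ b ∈ S, ⟪v, b⟫ - ⟪v, c⟫ ≤ ‖v‖ * ρ := by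
        intro b hb
        have h1 : f b < u := hfu b hb
        have h2 : u < f y := huy
        have h3 : ⟪v, y⟫ - ⟪v, c⟫ ≤ ‖v‖ * ρ := by
          have := real_inner_le_norm v (y - c)
          have hyc : ‖y - c‖ ≤ ρ := by rwa [mem_closedBall, dist_eq_norm] at hyball
          have := this.trans (mul_le_mul_of_nonneg_left hyc (norm_nonneg v))
          rwa [inner_sub_right] at this
        rw [hfv b, hfv y] at *
        linarith
      have hup := hbound a ha
      have hdown := hbound _ (hSsym a ha)
      rw [inner_sub_right, inner_smul_right] at hdown
      have habs : |⟪v, a⟫ - ⟪v, c⟫| ≤ ‖v‖ * ρ := abs_le.mpr ⟨by linarith, by linarith⟩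
      rw [hu₀, real_inner_smul_left, real_inner_smul_left, ← mul_sub, abs_mul,
        abs_of_nonneg (inv_nonneg.mpr (norm_nonneg v))]
      calc ‖v‖⁻¹ * |⟪v, a⟫ - ⟪v, c⟫| ≤ ‖v‖⁻¹ * (‖v‖ * ρ) :=
            mul_le_mul_of_nonneg_left habs (inv_nonneg.mpr (norm_nonneg v))
        _ = ρ := by rw [← mul_assoc, inv_mul_cancel₀ (norm_ne_zero_iff.mpr hvne), one_mul]
    have hTsub : S ⊆ {x : EuclideanSpace ℝ (Fin d) | ‖x‖ ≤ R ∧ |⟪u₀, x⟫ - ⟪u₀, c⟫| ≤ ρ} := by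
      intro x hx
      refine ⟨?_, hkey x hx⟩
      have := hFsub (hSsub hx)
      rwa [mem_closedBall, dist_zero_right] at this
    have hvolT := slab_volume d R ρ ⟪u₀, c⟫ hR.le hρpos.le u₀ hd hnu₀
    have hchain : ENNReal.ofReal t ≤ ENNReal.ofReal (t/2) := by
      refine hSvol.trans ((measure_mono hTsub).trans (hvolT.trans_eq ?_))
      rw [← ENNReal.ofReal_pow (by linarith), ← ENNReal.ofReal_mul (by linarith)]
      congr 1
      rw [hρ]
      have h2R : (0:ℝ) < (2*R)^(d-1) := by positivity
      field_simp
      ring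
    rw [ENNReal.ofReal_le_ofReal_iff (by linarith)] at hchain
    linarith
  have hint : (interior K).Nonempty := by
    by_contra h
    rw [Set.not_nonempty_iff_eq_empty] at h
    have hfr := hKconv.addHaar_frontier (volume : Measure (EuclideanSpace ℝ (Fin d)))
    rw [frontier, h, Set.diff_empty] at hfr
    have := hFvol.trans_eq hfr
    rw [le_zero_iff, ENNReal.ofReal_eq_zero] at this
    linarith
  obtain ⟨z, hz⟩ := hint
  refine ⟨(1/2:ℝ) • z + (1/2:ℝ) • c, ?_, ?_⟩
  · exact interior_subset (hKconv.combo_interior_closure_mem_interior hz (hSsub hcS)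
      (by norm_num) (by norm_num) (by norm_num))
  · intro w hw
    have hwc : ‖w - ((1/2:ℝ) • z + (1/2:ℝ) • c)‖ ≤ ρ/2 := by
      rwa [mem_closedBall, dist_eq_norm] at hw
    have hxF : (2:ℝ) • w - z ∈ closure K := by
      apply hSsub (hball _)
      rw [mem_closedBall, dist_eq_norm]
      have heq : (2:ℝ) • w - z - c = (2:ℝ) • (w - ((1/2:ℝ) • z + (1/2:ℝ) • c)) := by module
      rw [heq, norm_smul]
      simp only [Real.norm_ofNat]
      linarith
    have hweq : w = (1/2:ℝ) • z + (1/2:ℝ) • ((2:ℝ) • w - z) := by module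
    rw [hweq]
    exact interior_subset (hKconv.combo_interior_closure_mem_interior hz hxF
      (by norm_num) (by norm_num) (by norm_num))
end

section
/- Let ω ⊆ { (r, z) ∈ ℝ² : r ≥ 0 } and define the solid of revolution R(ω) = { x ∈ ℝ³ : ( ‖(x₁, x₂)‖ , x₃ ) ∈ ω } and the reflection-symmetrized cross section ω̃ = { (r, z) ∈ ℝ² : ( |r| , z ) ∈ ω }. Then R(ω) is convex if and only if ω̃ is convex. -/
/-- Cauchy–Schwarz style: the dot product is at most the product of norms. -/
lemma cs_aux (x0 x1 y0 y1 : ℝ) :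
    |x0 * y0 + x1 * y1| ≤ Real.sqrt (x0 ^ 2 + x1 ^ 2) * Real.sqrt (y0 ^ 2 + y1 ^ 2) := by
  calc |x0 * y0 + x1 * y1| = Real.sqrt ((x0 * y0 + x1 * y1) ^ 2) :=
        (Real.sqrt_sq_eq_abs _).symm
    _ ≤ Real.sqrt ((x0 ^ 2 + x1 ^ 2) * (y0 ^ 2 + y1 ^ 2)) :=
        Real.sqrt_le_sqrt (by nlinarith [sq_nonneg (x0 * y1 - x1 * y0)])
    _ = Real.sqrt (x0 ^ 2 + x1 ^ 2) * Real.sqrt (y0 ^ 2 + y1 ^ 2) :=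
        Real.sqrt_mul (by positivity) _

/-- Convexity of a solid of revolution: for `ω` contained in the half-plane
`{(r,z) : r ≥ 0}`, the rotated domain
`R(ω) = {x ∈ ℝ³ : (‖(x₁,x₂)‖, x₃) ∈ ω}` is convex if and only if the
reflection-symmetrized cross section `ω̃ = {(r,z) : (|r|,z) ∈ ω}` is convex. -/
theorem solid_of_revolution_convex_iff
    (ω : Set (ℝ × ℝ)) (hω : ∀ p ∈ ω, 0 ≤ p.1) :
    Convex ℝ {x : EuclideanSpace ℝ (Fin 3) |
        (Real.sqrt ((x 0) ^ 2 + (x 1) ^ 2), x 2) ∈ ω} ↔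
      Convex ℝ {p : ℝ × ℝ | (|p.1|, p.2) ∈ ω} := by
  constructor
  · intro hS p hp q hq a b ha hb hab
    -- map (r,z) to (r,0,z)
    have hx : (!₂[p.1, 0, p.2] : EuclideanSpace ℝ (Fin 3)) ∈
        {x : EuclideanSpace ℝ (Fin 3) |
          (Real.sqrt ((x 0) ^ 2 + (x 1) ^ 2), x 2) ∈ ω} := by
      show (Real.sqrt (p.1 ^ 2 + 0 ^ 2), p.2) ∈ ω
      have : Real.sqrt (p.1 ^ 2 + 0 ^ 2) = |p.1| := by
        rw [show p.1 ^ 2 + 0 ^ 2 = p.1 ^ 2 by ring, Real.sqrt_sq_eq_abs]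
      rw [this]; exact hp
    have hy : (!₂[q.1, 0, q.2] : EuclideanSpace ℝ (Fin 3)) ∈
        {x : EuclideanSpace ℝ (Fin 3) |
          (Real.sqrt ((x 0) ^ 2 + (x 1) ^ 2), x 2) ∈ ω} := by
      show (Real.sqrt (q.1 ^ 2 + 0 ^ 2), q.2) ∈ ω
      have : Real.sqrt (q.1 ^ 2 + 0 ^ 2) = |q.1| := by
        rw [show q.1 ^ 2 + 0 ^ 2 = q.1 ^ 2 by ring, Real.sqrt_sq_eq_abs]
      rw [this]; exact hq
    have key := hS hx hy ha hb hab
    have e0 : (a • (!₂[p.1, 0, p.2] : EuclideanSpace ℝ (Fin 3))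
        + b • (!₂[q.1, 0, q.2] : EuclideanSpace ℝ (Fin 3))) 0 = a * p.1 + b * q.1 := by
      simp [PiLp.add_apply, PiLp.smul_apply]
    have e1 : (a • (!₂[p.1, 0, p.2] : EuclideanSpace ℝ (Fin 3))
        + b • (!₂[q.1, 0, q.2] : EuclideanSpace ℝ (Fin 3))) 1 = 0 := by
      simp [PiLp.add_apply, PiLp.smul_apply]
    have e2 : (a • (!₂[p.1, 0, p.2] : EuclideanSpace ℝ (Fin 3))
        + b • (!₂[q.1, 0, q.2] : EuclideanSpace ℝ (Fin 3))) 2 = a * p.2 + b * q.2 := by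
      simp [PiLp.add_apply, PiLp.smul_apply]
    simp only [Set.mem_setOf_eq, e0, e1, e2] at key
    have heq : Real.sqrt ((a * p.1 + b * q.1) ^ 2 + 0 ^ 2) = |a * p.1 + b * q.1| := by
      rw [show (a * p.1 + b * q.1) ^ 2 + 0 ^ 2 = (a * p.1 + b * q.1) ^ 2 by ring,
        Real.sqrt_sq_eq_abs]
    rw [heq] at key
    simp only [Set.mem_setOf_eq, Prod.fst_add, Prod.snd_add, Prod.smul_fst,
      Prod.smul_snd, smul_eq_mul]
    exact key
  · intro hT x hx y hy a b ha hb hab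
    simp only [Set.mem_setOf_eq] at hx hy ⊢
    set rx := Real.sqrt ((x 0) ^ 2 + (x 1) ^ 2) with hrx
    set ry := Real.sqrt ((y 0) ^ 2 + (y 1) ^ 2) with hry
    have hrx0 : 0 ≤ rx := Real.sqrt_nonneg _
    have hry0 : 0 ≤ ry := Real.sqrt_nonneg _
    have hrxsq : rx ^ 2 = (x 0) ^ 2 + (x 1) ^ 2 := Real.sq_sqrt (by positivity)
    have hrysq : ry ^ 2 = (y 0) ^ 2 + (y 1) ^ 2 := Real.sq_sqrt (by positivity)
    have hcs := cs_aux (x 0) (x 1) (y 0) (y 1)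
    rw [← hrx, ← hry, abs_le] at hcs
    have heval0 : (a • x + b • y) 0 = a * x 0 + b * y 0 := by
      simp [PiLp.add_apply, PiLp.smul_apply]
    have heval1 : (a • x + b • y) 1 = a * x 1 + b * y 1 := by
      simp [PiLp.add_apply, PiLp.smul_apply]
    have heval2 : (a • x + b • y) 2 = a * x 2 + b * y 2 := by
      simp [PiLp.add_apply, PiLp.smul_apply]
    rw [heval0, heval1, heval2]
    set n := Real.sqrt ((a * x 0 + b * y 0) ^ 2 + (a * x 1 + b * y 1) ^ 2) with hn
    have hn0 : 0 ≤ n := Real.sqrt_nonneg _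
    -- upper bound: n ≤ a*rx + b*ry
    have hsum : 0 ≤ a * rx + b * ry := by positivity
    have hub : n ≤ a * rx + b * ry := by
      have hsq : (a * x 0 + b * y 0) ^ 2 + (a * x 1 + b * y 1) ^ 2
          ≤ (a * rx + b * ry) ^ 2 := by
        have e1 : a ^ 2 * rx ^ 2 = a ^ 2 * ((x 0) ^ 2 + (x 1) ^ 2) := by rw [hrxsq]
        have e2 : b ^ 2 * ry ^ 2 = b ^ 2 * ((y 0) ^ 2 + (y 1) ^ 2) := by rw [hrysq]
        have h1 : a * b * (x 0 * y 0 + x 1 * y 1) ≤ a * b * (rx * ry) :=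
          mul_le_mul_of_nonneg_left hcs.2 (mul_nonneg ha hb)
        linarith [e1, e2, h1]
      calc n ≤ Real.sqrt ((a * rx + b * ry) ^ 2) := Real.sqrt_le_sqrt hsq
        _ = a * rx + b * ry := Real.sqrt_sq hsum
    -- lower bound: a*rx - b*ry ≤ n
    have hlb : a * rx - b * ry ≤ n := by
      rcases le_or_gt (a * rx - b * ry) 0 with h | h
      · linarith
      · have hsq : (a * rx - b * ry) ^ 2
            ≤ (a * x 0 + b * y 0) ^ 2 + (a * x 1 + b * y 1) ^ 2 := by
          have e1 : a ^ 2 * rx ^ 2 = a ^ 2 * ((x 0) ^ 2 + (x 1) ^ 2) := by rw [hrxsq]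
          have e2 : b ^ 2 * ry ^ 2 = b ^ 2 * ((y 0) ^ 2 + (y 1) ^ 2) := by rw [hrysq]
          have h1 : a * b * (-(rx * ry)) ≤ a * b * (x 0 * y 0 + x 1 * y 1) :=
            mul_le_mul_of_nonneg_left hcs.1 (mul_nonneg ha hb)
          linarith [e1, e2, h1]
        calc a * rx - b * ry = Real.sqrt ((a * rx - b * ry) ^ 2) :=
              (Real.sqrt_sq h.le).symm
          _ ≤ n := Real.sqrt_le_sqrt hsq
    -- the two endpoints in ω̃
    have hP : ((a * rx - b * ry, a * x 2 + b * y 2) : ℝ × ℝ) ∈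
        {p : ℝ × ℝ | (|p.1|, p.2) ∈ ω} := by
      have h1 : ((rx, x 2) : ℝ × ℝ) ∈ {p : ℝ × ℝ | (|p.1|, p.2) ∈ ω} := by
        simp only [Set.mem_setOf_eq, abs_of_nonneg hrx0]; exact hx
      have h2 : ((-ry, y 2) : ℝ × ℝ) ∈ {p : ℝ × ℝ | (|p.1|, p.2) ∈ ω} := by
        simp only [Set.mem_setOf_eq, abs_neg, abs_of_nonneg hry0]; exact hy
      have hmem := hT h1 h2 ha hb hab
      have : a • ((rx, x 2) : ℝ × ℝ) + b • ((-ry, y 2) : ℝ × ℝ)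
          = (a * rx - b * ry, a * x 2 + b * y 2) := by
        rw [Prod.smul_mk, Prod.smul_mk, Prod.mk_add_mk, Prod.mk.injEq]
        constructor <;> simp only [smul_eq_mul] <;> ring
      rwa [this] at hmem
    have hQ : ((a * rx + b * ry, a * x 2 + b * y 2) : ℝ × ℝ) ∈
        {p : ℝ × ℝ | (|p.1|, p.2) ∈ ω} := by
      have h1 : ((rx, x 2) : ℝ × ℝ) ∈ {p : ℝ × ℝ | (|p.1|, p.2) ∈ ω} := by
        simp only [Set.mem_setOf_eq, abs_of_nonneg hrx0]; exact hx
      have h2 : ((ry, y 2) : ℝ × ℝ) ∈ {p : ℝ × ℝ | (|p.1|, p.2) ∈ ω} := by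
        simp only [Set.mem_setOf_eq, abs_of_nonneg hry0]; exact hy
      have hmem := hT h1 h2 ha hb hab
      have : a • ((rx, x 2) : ℝ × ℝ) + b • ((ry, y 2) : ℝ × ℝ)
          = (a * rx + b * ry, a * x 2 + b * y 2) := by
        rw [Prod.smul_mk, Prod.smul_mk, Prod.mk_add_mk, Prod.mk.injEq]
        constructor <;> simp only [smul_eq_mul] <;> ring
      rwa [this] at hmem
    -- (n, z) lies on the segment between the two endpoints
    have hseg : n ∈ segment ℝ (a * rx - b * ry) (a * rx + b * ry) := by
      rw [segment_eq_Icc (by linarith)]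
      exact ⟨hlb, hub⟩
    obtain ⟨u, v, hu, hv, huv, huveq⟩ := hseg
    have hmem := hT hP hQ hu hv huv
    have hz : u • ((a * rx - b * ry, a * x 2 + b * y 2) : ℝ × ℝ)
        + v • ((a * rx + b * ry, a * x 2 + b * y 2) : ℝ × ℝ)
        = (n, a * x 2 + b * y 2) := by
      rw [Prod.smul_mk, Prod.smul_mk, Prod.mk_add_mk, Prod.mk.injEq]
      refine ⟨by simpa using huveq, ?_⟩
      simp only [smul_eq_mul]
      rw [← add_mul, huv, one_mul]
    rw [hz] at hmem
    simpa [abs_of_nonneg hn0] using hmem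
end
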